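/- Let n ∈ ℕ, let G be a constant real symmetric positive definite n×n matrix, let F : ℝⁿ → ℝ be continuously differentiable, and let x : ℝ → ℝⁿ be differentiable with x'(t) = G·∇F(x(t)) for all t. If x is periodic, i.e. x(t + T) = x(t) for all t and some T > 0, then x is constant. In particular, the gradient flow admits no nonconstant periodic orbits (no RG limit cycles). -/

import Mathlib

/-- Gradient flow with a constant symmetric positive definite metric `G`
admits no nonconstant periodic orbits: any periodic solution of
`x' = G ∇F(x)` is constant. -/
theorem stmt8 (n : ℕ) (G : Matrix (Fin n) (Fin n) ℝ)
    (hGsymm : G.IsSymm) (hGpd : G.PosDef)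
    (F : EuclideanSpace ℝ (Fin n) → ℝ) (hF : ContDiff ℝ 1 F)
    (x : ℝ → EuclideanSpace ℝ (Fin n)) (hx : Differentiable ℝ x)
    (hflow : ∀ t : ℝ, deriv x t = Matrix.toEuclideanLin G (gradient F (x t)))
    (T : ℝ) (hT : 0 < T) (hper : ∀ t : ℝ, x (t + T) = x t) :
    ∀ t₁ t₂ : ℝ, x t₁ = x t₂ := by
  have hFd : Differentiable ℝ F := hF.differentiable one_ne_zero
  set g : ℝ → ℝ := fun t => F (x t) with hg
  have hquad : ∀ v : EuclideanSpace ℝ (Fin n),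
      (inner ℝ v (Matrix.toEuclideanLin G v) : ℝ)
        = dotProduct (star ((WithLp.equiv 2 (Fin n → ℝ)) v)) (G.mulVec ((WithLp.equiv 2 (Fin n → ℝ)) v)) := by
    intro v
    simp [PiLp.inner_apply, Matrix.toEuclideanLin_apply, dotProduct, mul_comm]
  have hderiv : ∀ t, HasDerivAt g (inner ℝ (gradient F (x t)) (deriv x t) : ℝ) t := by
    intro t
    have h1 := (hFd (x t)).hasGradientAt.hasFDerivAt
    have h2 := h1.comp_hasDerivAt t (hx t).hasDerivAt
    exact h2
  have hgd : ∀ t, deriv g t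
      = (inner ℝ (gradient F (x t)) (Matrix.toEuclideanLin G (gradient F (x t))) : ℝ) := by
    intro t
    rw [(hderiv t).deriv, hflow t]
  have hmono : Monotone g :=
    monotone_of_deriv_nonneg (fun t => (hderiv t).differentiableAt) (fun t => by
      rw [hgd t, hquad]
      exact hGpd.posSemidef.dotProduct_mulVec_nonneg _)
  have hgper : Function.Periodic g T := fun t => by simp [hg, hper t]
  have hgconst : ∀ s t : ℝ, g s = g t := by
    have key : ∀ s t : ℝ, s ≤ t → g s = g t := by
      intro s t h
      refine le_antisymm (hmono h) ?_
      obtain ⟨m, hm⟩ := Archimedean.arch (t - s) hT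
      have h2 : g t ≤ g (s + m * T) := hmono (by
        have : (m : ℝ) * T = m • T := by simp
        linarith [hm, this ▸ hm])
      calc g t ≤ g (s + m * T) := h2
        _ = g s := (hgper.nat_mul m) s
    intro s t
    rcases le_total s t with h | h
    · exact key s t h
    · exact (key t s h).symm
  have hgzero : ∀ t, deriv g t = 0 := by
    intro t
    have : g = fun _ => g 0 := funext fun s => hgconst s 0
    rw [this]; simp
  have hgradzero : ∀ t, gradient F (x t) = 0 := by
    intro t
    by_contra hv
    have hv' : (WithLp.equiv 2 (Fin n → ℝ)) (gradient F (x t)) ≠ 0 := by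
      simpa using hv
    have hpos := hGpd.dotProduct_mulVec_pos hv'
    have := hgzero t
    rw [hgd t, hquad] at this
    rw [this] at hpos
    exact lt_irrefl _ hpos
  have hxderiv : ∀ t, deriv x t = 0 := fun t => by
    rw [hflow t, hgradzero t, map_zero]
  exact is_const_of_deriv_eq_zero hx hxderiv
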